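/- arXiv:2202.08723 — 3 statements merged into one kernel-verified Lean document; each statement's English description precedes it below -/
import Mathlib

section
/- Let X and Y be Banach spaces, A : X → Y a surjective continuous linear operator, and B : X → Y a compact continuous linear operator. Then the range of A + B is a closed subspace of Y. -/
open Metric Set

/-- If `T` approximately (with error factor `1/2`) solves every equation with controlled norm,
then `T` is surjective. -/
lemma surjective_of_approx {E F : Type*} [NormedAddCommGroup E] [NormedSpace ℝ E]
    [CompleteSpace E] [NormedAddCommGroup F] [NormedSpace ℝ F] (T : E →L[ℝ] F) (M : ℝ)
    (hM : 0 ≤ M) (h : ∀ y : F, ∃ x : E, ‖x‖ ≤ M * ‖y‖ ∧ ‖y - T x‖ ≤ ‖y‖ / 2) :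
    Function.Surjective T := by
  intro y
  choose g hg1 hg2 using h
  -- residuals
  let r : ℕ → F := fun n => (fun z => z - T (g z))^[n] y
  have hr_succ : ∀ n, r (n + 1) = r n - T (g (r n)) := by
    intro n
    simp only [r, Function.iterate_succ_apply']
  have hr_norm : ∀ n, ‖r n‖ ≤ (1 / 2) ^ n * ‖y‖ := by
    intro n
    induction n with
    | zero => simp [r]
    | succ n ih =>
      rw [hr_succ n]
      calc ‖r n - T (g (r n))‖ ≤ ‖r n‖ / 2 := hg2 (r n)
        _ ≤ ((1 / 2) ^ n * ‖y‖) / 2 := by linarith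
        _ = (1 / 2) ^ (n + 1) * ‖y‖ := by ring
  have hsum : Summable fun n => g (r n) := by
    apply Summable.of_norm_bounded (g := fun n => M * ‖y‖ * (1 / 2) ^ n)
    · exact (summable_geometric_two).mul_left _
    · intro n
      calc ‖g (r n)‖ ≤ M * ‖r n‖ := hg1 (r n)
        _ ≤ M * ((1 / 2) ^ n * ‖y‖) := by
            exact mul_le_mul_of_nonneg_left (hr_norm n) hM
        _ = M * ‖y‖ * (1 / 2) ^ n := by ring
  refine ⟨∑' n, g (r n), ?_⟩
  have hTsum : HasSum (fun n => T (g (r n))) (T (∑' n, g (r n))) :=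
    (hsum.hasSum).mapL T
  have hpartial : ∀ n, ∑ k ∈ Finset.range n, T (g (r k)) = y - r n := by
    intro n
    induction n with
    | zero => simp [r]
    | succ n ih =>
      rw [Finset.sum_range_succ, ih, hr_succ n]
      abel
  have hrlim : Filter.Tendsto r Filter.atTop (nhds 0) := by
    have : Filter.Tendsto (fun n => (1 / 2 : ℝ) ^ n * ‖y‖) Filter.atTop (nhds 0) := by
      simpa using (tendsto_pow_atTop_nhds_zero_of_lt_one (r := (1/2:ℝ)) (by norm_num) (by norm_num)).mul_const ‖y‖
    exact squeeze_zero_norm hr_norm this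
  have h1 : Filter.Tendsto (fun n => ∑ k ∈ Finset.range n, T (g (r k)))
      Filter.atTop (nhds y) := by
    simp only [hpartial]
    simpa using Filter.Tendsto.sub (tendsto_const_nhds (x := y)) hrlim
  exact tendsto_nhds_unique hTsum.tendsto_sum_nat h1

/-- If the range of `T` plus a finite-dimensional subspace is everything, the range is closed. -/
lemma isClosed_range_of_finiteDimensional_sup {X Y : Type*} [NormedAddCommGroup X]
    [NormedSpace ℝ X] [CompleteSpace X] [NormedAddCommGroup Y] [NormedSpace ℝ Y]
    [CompleteSpace Y] (T : X →L[ℝ] Y) (F : Submodule ℝ Y) [FiniteDimensional ℝ F]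
    (hF : LinearMap.range (T : X →ₗ[ℝ] Y) ⊔ F = ⊤) : IsClosed (LinearMap.range (T : X →ₗ[ℝ] Y) : Set Y) := by
  classical
  set R : Submodule ℝ Y := LinearMap.range (T : X →ₗ[ℝ] Y) with hR
  obtain ⟨q, hq⟩ := R.exists_isCompl
  -- q is finite dimensional
  haveI : FiniteDimensional ℝ q := by
    let π : Y →ₗ[ℝ] q := q.linearProjOfIsCompl R hq.symm
    have hsurj : Function.Surjective (π.comp F.subtype) := by
      intro v
      have hv : (v : Y) ∈ R ⊔ F := hF ▸ Submodule.mem_top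
      obtain ⟨r, hr, f, hf, hrf⟩ := Submodule.mem_sup.mp hv
      refine ⟨⟨f, hf⟩, ?_⟩
      have h1 : π r = 0 := Submodule.linearProjOfIsCompl_apply_right' hq.symm hr
      have h2 : π (v : Y) = v := Submodule.linearProjOfIsCompl_apply_left hq.symm v
      have : π (v : Y) = π r + π f := by rw [← map_add, hrf]
      simp only [LinearMap.comp_apply, Submodule.subtype_apply]
      rw [← h2, this, h1, zero_add]
    exact Module.Finite.of_surjective _ hsurj
  set Z : Submodule ℝ Y := R.topologicalClosure with hZ
  have hZclosed : IsClosed (Z : Set Y) := R.isClosed_topologicalClosure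
  have hRZ : R ≤ Z := R.le_topologicalClosure
  set q' : Submodule ℝ Y := q ⊓ Z with hq'
  haveI : FiniteDimensional ℝ q' := Submodule.finiteDimensional_of_le (inf_le_left : q' ≤ q)
  haveI : CompleteSpace Z := hZclosed.completeSpace_coe
  -- the operator S : X × q' → Z
  have hTZ : ∀ x : X, T x ∈ Z := fun x => hRZ (LinearMap.mem_range_self (T : X →ₗ[ℝ] Y) x)
  have hq'Z : ∀ v : q', (v : Y) ∈ Z := fun v => (inf_le_right : q' ≤ Z) v.2
  set S : X × q' →L[ℝ] Z :=
    (T.codRestrict Z hTZ).comp (ContinuousLinearMap.fst ℝ X q') +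
      (q'.subtypeL.codRestrict Z hq'Z).comp (ContinuousLinearMap.snd ℝ X q') with hS
  have hSapply : ∀ p : X × q', (S p : Y) = T p.1 + (p.2 : Y) := fun p => rfl
  have hSsurj : Function.Surjective S := by
    intro z
    have hz : (z : Y) ∈ R ⊔ q' := by
      have hzY : (z : Y) ∈ (⊤ : Submodule ℝ Y) := Submodule.mem_top
      rw [← hq.sup_eq_top] at hzY
      obtain ⟨r, hr, f, hf, hrf⟩ := Submodule.mem_sup.mp hzY
      have hfZ : f ∈ Z := by
        have : f = (z : Y) - r := by rw [← hrf]; abel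
        rw [this]
        exact Z.sub_mem z.2 (hRZ hr)
      exact Submodule.mem_sup.mpr ⟨r, hr, f, ⟨hf, hfZ⟩, hrf⟩
    obtain ⟨r, hr, f, hf, hrf⟩ := Submodule.mem_sup.mp hz
    obtain ⟨x, hx⟩ := hr
    refine ⟨(x, ⟨f, hf⟩), ?_⟩
    apply Subtype.ext
    rw [hSapply]
    simp only
    rw [show T x = r from hx, hrf]
  obtain ⟨c, hc0, hc⟩ := S.exists_preimage_norm_le hSsurj
  -- q' is trivial
  have hq'bot : q' = ⊥ := by
    rw [Submodule.eq_bot_iff]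
    intro f hf
    have hfq : f ∈ q := hf.1
    have hfZ : f ∈ Z := hf.2
    have hnorm : ∀ ε : ℝ, 0 < ε → ‖f‖ ≤ c * ε := by
      intro ε hε
      obtain ⟨r, hrR, hrε⟩ : ∃ r ∈ R, ‖f - r‖ < ε := by
        have : f ∈ closure (R : Set Y) := hfZ
        obtain ⟨r, hr, hrd⟩ := Metric.mem_closure_iff.mp this ε hε
        exact ⟨r, hr, by rwa [dist_eq_norm] at hrd⟩
      have hfrZ : f - r ∈ Z := Z.sub_mem hfZ (hRZ hrR)
      obtain ⟨p, hp, hpnorm⟩ := hc ⟨f - r, hfrZ⟩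
      -- (S p : Y) = T p.1 + p.2 = f - r
      have heq : T p.1 + (p.2 : Y) = f - r := congrArg Subtype.val hp
      -- f - p.2 = r + T p.1 ∈ R  and  f - p.2 ∈ q
      have hmem : f - (p.2 : Y) ∈ R ⊓ q := by
        constructor
        · have : f - (p.2 : Y) = r + T p.1 := by
            have h := heq
            rw [eq_sub_iff_add_eq] at h
            rw [← h]; abel
          rw [this]
          exact R.add_mem hrR (LinearMap.mem_range_self (T : X →ₗ[ℝ] Y) p.1)
        · exact q.sub_mem hfq p.2.2.1
      have hzero : f - (p.2 : Y) = 0 := by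
        have h0 : f - (p.2 : Y) ∈ (⊥ : Submodule ℝ Y) := hq.inf_eq_bot ▸ hmem
        simpa using h0
      have hfp : f = (p.2 : Y) := by
        have := sub_eq_zero.mp hzero; exact this
      calc ‖f‖ = ‖(p.2 : Y)‖ := by rw [hfp]
        _ ≤ ‖p‖ := by
            rw [Prod.norm_def]
            exact le_max_right _ _
        _ ≤ c * ‖(⟨f - r, hfrZ⟩ : Z)‖ := hpnorm
        _ ≤ c * ε := by
            apply mul_le_mul_of_nonneg_left _ hc0.le
            exact le_of_lt (by simpa [Submodule.norm_coe] using hrε)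
    have : ‖f‖ ≤ 0 := by
      by_contra hcon
      push_neg at hcon
      have hcne : c ≠ 0 := hc0.ne'
      have := hnorm (‖f‖ / (2 * c)) (by positivity)
      have h2 : c * (‖f‖ / (2 * c)) = ‖f‖ / 2 := by
        field_simp
      rw [h2] at this
      linarith
    simpa using norm_le_zero_iff.mp this
  -- conclude R = Z
  have hZR : Z ≤ R := by
    intro z hzZ
    have hz : z ∈ R ⊔ q' := by
      have hzY : z ∈ (⊤ : Submodule ℝ Y) := Submodule.mem_top
      rw [← hq.sup_eq_top] at hzY
      obtain ⟨r, hr, f, hf, hrf⟩ := Submodule.mem_sup.mp hzY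
      have hfZ : f ∈ Z := by
        have : f = z - r := by rw [← hrf]; abel
        rw [this]
        exact Z.sub_mem hzZ (hRZ hr)
      exact Submodule.mem_sup.mpr ⟨r, hr, f, ⟨hf, hfZ⟩, hrf⟩
    rw [hq'bot, sup_bot_eq] at hz
    exact hz
  have : R = Z := le_antisymm hRZ hZR
  rw [this]
  exact hZclosed

/-- Let `X` and `Y` be Banach spaces, `A : X → Y` a surjective continuous linear operator,
and `B : X → Y` a compact continuous linear operator. Then the range of `A + B` is closed. -/
theorem closed_range_of_surjective_add_compact
    {X Y : Type*} [NormedAddCommGroup X] [NormedSpace ℝ X] [CompleteSpace X]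
    [NormedAddCommGroup Y] [NormedSpace ℝ Y] [CompleteSpace Y]
    (A B : X →L[ℝ] Y) (hA : Function.Surjective A) (hB : IsCompactOperator B) :
    IsClosed (Set.range (A + B)) := by
  classical
  obtain ⟨C, hC0, hC⟩ := A.exists_preimage_norm_le hA
  -- compact image of the C-ball
  obtain ⟨K, hKcompact, hKsub⟩ :=
    hB.image_subset_compact_of_bounded (f := (B : X →ₗ[ℝ] Y)) (Metric.isBounded_closedBall
      (x := (0 : X)) (r := C))

  -- finite 1/2-net of K
  obtain ⟨t, htfin, htsub⟩ := totallyBounded_iff.mp hKcompact.totallyBounded (1/2) (by norm_num)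
  set F : Submodule ℝ Y := Submodule.span ℝ t with hF
  haveI : FiniteDimensional ℝ F := FiniteDimensional.span_of_finite ℝ htfin
  -- the extended operator S : X × F → Y
  set T : X →L[ℝ] Y := A + B with hT
  set S : X × F →L[ℝ] Y :=
    T.comp (ContinuousLinearMap.fst ℝ X F) +
      F.subtypeL.comp (ContinuousLinearMap.snd ℝ X F) with hS
  have hSapply : ∀ p : X × F, S p = T p.1 + (p.2 : Y) := fun p => rfl
  -- approximation property
  set M : ℝ := max C (‖B‖ * C + 1) with hM
  have hM0 : 0 ≤ M := le_trans hC0.le (le_max_left _ _)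
  have happrox : ∀ y : Y, ∃ p : X × F, ‖p‖ ≤ M * ‖y‖ ∧ ‖y - S p‖ ≤ ‖y‖ / 2 := by
    intro y
    rcases eq_or_ne y 0 with rfl | hy
    · exact ⟨0, by simp, by simp⟩
    · have hy0 : (0:ℝ) < ‖y‖ := norm_pos_iff.mpr hy
      obtain ⟨x, hAx, hxnorm⟩ := hC y
      have hxball : (‖y‖⁻¹ • x) ∈ Metric.closedBall (0:X) C := by
        rw [Metric.mem_closedBall, dist_zero_right, norm_smul, norm_inv, norm_norm]
        rw [inv_mul_le_iff₀ hy0, mul_comm]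
        exact hxnorm
      have hBmem : B (‖y‖⁻¹ • x) ∈ K := hKsub ⟨_, hxball, rfl⟩
      obtain ⟨k, hkt, hkball⟩ : ∃ k ∈ t, B (‖y‖⁻¹ • x) ∈ Metric.ball k (1/2) := by
        have := htsub hBmem
        simpa using this
      set f : Y := -(‖y‖ • k) with hf
      have hfF : f ∈ F := F.neg_mem (F.smul_mem _ (Submodule.subset_span hkt))
      refine ⟨(x, ⟨f, hfF⟩), ?_, ?_⟩
      · rw [Prod.norm_def]
        apply max_le
        · calc ‖x‖ ≤ C * ‖y‖ := hxnorm
            _ ≤ M * ‖y‖ := by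
              apply mul_le_mul_of_nonneg_right (le_max_left _ _) hy0.le
        · show ‖f‖ ≤ M * ‖y‖
          have hknorm : ‖k‖ ≤ ‖B‖ * C + 1 / 2 := by
            have h1 : ‖B (‖y‖⁻¹ • x)‖ ≤ ‖B‖ * C := by
              calc ‖B (‖y‖⁻¹ • x)‖ ≤ ‖B‖ * ‖‖y‖⁻¹ • x‖ := B.le_opNorm _
                _ ≤ ‖B‖ * C := by
                  apply mul_le_mul_of_nonneg_left _ (norm_nonneg B)
                  simpa [dist_zero_right] using hxball
            have h2 : ‖k - B (‖y‖⁻¹ • x)‖ < 1/2 := by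
              rw [Metric.mem_ball, dist_eq_norm] at hkball
              rw [norm_sub_rev]
              exact hkball
            calc ‖k‖ ≤ ‖B (‖y‖⁻¹ • x)‖ + ‖k - B (‖y‖⁻¹ • x)‖ := by
                  have := norm_add_le (B (‖y‖⁻¹ • x)) (k - B (‖y‖⁻¹ • x))
                  simpa using this
              _ ≤ ‖B‖ * C + 1/2 := by linarith
          calc ‖f‖ = ‖y‖ * ‖k‖ := by
                rw [hf, norm_neg, norm_smul, norm_norm]
            _ ≤ ‖y‖ * (‖B‖ * C + 1/2) := mul_le_mul_of_nonneg_left hknorm hy0.le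
            _ ≤ M * ‖y‖ := by
                rw [mul_comm]
                apply mul_le_mul_of_nonneg_right _ hy0.le
                calc ‖B‖ * C + 1/2 ≤ ‖B‖ * C + 1 := by linarith
                  _ ≤ M := le_max_right _ _
      · -- error estimate
        have hTx : T x = y + B x := by
          rw [hT]
          simp only [ContinuousLinearMap.add_apply]
          rw [hAx]
        have hBx : B x = ‖y‖ • B (‖y‖⁻¹ • x) := by
          rw [← map_smul, smul_smul, mul_inv_cancel₀ hy0.ne', one_smul]
        have : y - S (x, ⟨f, hfF⟩) = -(‖y‖ • (B (‖y‖⁻¹ • x) - k)) := by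
          rw [hSapply]
          simp only
          rw [hTx, hf, hBx, smul_sub]
          abel
        rw [this, norm_neg, norm_smul, norm_norm]
        have h2 : ‖B (‖y‖⁻¹ • x) - k‖ ≤ 1/2 := by
          rw [Metric.mem_ball, dist_eq_norm] at hkball
          exact hkball.le
        calc ‖y‖ * ‖B (‖y‖⁻¹ • x) - k‖ ≤ ‖y‖ * (1/2) := mul_le_mul_of_nonneg_left h2 hy0.le
          _ = ‖y‖ / 2 := by ring
  have hSsurj : Function.Surjective S := surjective_of_approx S M hM0 happrox
  -- hence range T ⊔ F = ⊤
  have hsup : LinearMap.range (T : X →ₗ[ℝ] Y) ⊔ F = ⊤ := by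
    rw [eq_top_iff]
    intro y _
    obtain ⟨p, hp⟩ := hSsurj y
    rw [hSapply] at hp
    exact Submodule.mem_sup.mpr ⟨T p.1, LinearMap.mem_range_self (T : X →ₗ[ℝ] Y) p.1, (p.2 : Y), p.2.2, hp⟩
  have := isClosed_range_of_finiteDimensional_sup T F hsup
  have hrange : (LinearMap.range (T : X →ₗ[ℝ] Y) : Set Y) = Set.range (A + B) := by
    rw [hT]
    ext y
    simp [LinearMap.mem_range, Set.mem_range]
  rwa [hrange] at this
end

section
/- Let X and Y be Banach spaces, A : X → Y a surjective continuous linear operator, and B : X → Y a compact continuous linear operator. Then the kernel of the adjoint operator A* + B* : Y* → X* is finite-dimensional. -/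
open NormedSpace

/-- The Banach-space adjoint (transpose) of a continuous linear map. -/
noncomputable def banachAdjoint {X Y : Type*} [NormedAddCommGroup X] [NormedSpace ℝ X]
    [NormedAddCommGroup Y] [NormedSpace ℝ Y] (A : X →L[ℝ] Y) :
    StrongDual ℝ Y →L[ℝ] StrongDual ℝ X :=
  (ContinuousLinearMap.compL ℝ X Y ℝ).flip A

set_option maxHeartbeats 800000 in
/-- Let `X` and `Y` be Banach spaces, `A : X → Y` a surjective continuous linear operator,
and `B : X → Y` a compact continuous linear operator. Then the kernel of the adjoint
operator `A* + B* : Y* → X*` is finite-dimensional. -/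
theorem finiteDimensional_ker_adjoint_add
    {X Y : Type*} [NormedAddCommGroup X] [NormedSpace ℝ X] [CompleteSpace X]
    [NormedAddCommGroup Y] [NormedSpace ℝ Y] [CompleteSpace Y]
    (A B : X →L[ℝ] Y) (hA : Function.Surjective A) (hB : IsCompactOperator B) :
    FiniteDimensional ℝ (LinearMap.ker (banachAdjoint A + banachAdjoint B).toLinearMap) := by
  classical
  set T : StrongDual ℝ Y →L[ℝ] StrongDual ℝ X := banachAdjoint A + banachAdjoint B with hTdef
  set N : Submodule ℝ (StrongDual ℝ Y) := LinearMap.ker T.toLinearMap with hNdef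
  -- `A*` is bounded below
  obtain ⟨C, hC0, hC⟩ := A.exists_preimage_norm_le hA
  have key : ∀ f : StrongDual ℝ Y, ‖f‖ ≤ C * ‖banachAdjoint A f‖ := by
    intro f
    refine f.opNorm_le_bound (by positivity) fun y => ?_
    obtain ⟨x, hx, hxn⟩ := hC y
    calc ‖f y‖ = ‖(banachAdjoint A f) x‖ := by rw [← hx]; rfl
    _ ≤ ‖banachAdjoint A f‖ * ‖x‖ := (banachAdjoint A f).le_opNorm x
    _ ≤ ‖banachAdjoint A f‖ * (C * ‖y‖) :=
        mul_le_mul_of_nonneg_left hxn (norm_nonneg _)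
    _ = C * ‖banachAdjoint A f‖ * ‖y‖ := by ring
  -- the compact set `K`
  set K : Set Y := closure (B '' Metric.closedBall 0 1) with hKdef
  have hK : IsCompact K := hB.isCompact_closure_image_closedBall 1
  -- the unit ball of the kernel, seen inside the dual
  set S : Set (StrongDual ℝ Y) := Subtype.val '' (Metric.closedBall (0 : N) 1) with hSdef
  have hSnorm : ∀ f ∈ S, ‖f‖ ≤ 1 ∧ T f = 0 := by
    rintro f ⟨g, hg, rfl⟩
    refine ⟨?_, g.2⟩
    rw [← Submodule.coe_norm]
    exact (mem_closedBall_zero_iff (E := N)).1 hg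
  have hStb : TotallyBounded S := by
    rw [Metric.totallyBounded_iff]
    intro δ hδ
    set ε : ℝ := δ / (3 * (C + 1)) with hεdef
    have hε : 0 < ε := by positivity
    -- finite `ε`-net of `K`
    obtain ⟨t, htfin, htcov⟩ := (Metric.totallyBounded_iff.1 hK.totallyBounded) ε hε
    haveI : Fintype ↥t := htfin.fintype
    -- evaluation map into a finite-dimensional space
    set Φ : StrongDual ℝ Y →L[ℝ] (↥t → ℝ) :=
      ContinuousLinearMap.pi (fun z : ↥t => ContinuousLinearMap.apply ℝ ℝ (z : Y)) with hΦdef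
    have hΦf : ∀ (f : StrongDual ℝ Y) (z : ↥t), Φ f z = f z := fun _ _ => rfl
    -- the image `Φ '' S` is totally bounded
    have himtb : TotallyBounded (Φ '' S) := by
      have hbdd : Bornology.IsBounded (Φ '' S) := by
        have hSb : Bornology.IsBounded S :=
          Metric.isBounded_closedBall.subset
            (fun f hf => mem_closedBall_zero_iff.2 (hSnorm f hf).1)
        exact (Φ.lipschitz.isBounded_image hSb)
      obtain ⟨R, hR⟩ := hbdd.subset_closedBall 0
      exact (isCompact_closedBall _ _).totallyBounded.subset hR
    obtain ⟨t', ht'sub, ht'fin, ht'cov⟩ :=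
      totallyBounded_iff_subset.1 himtb {p | dist p.1 p.2 < ε} (Metric.dist_mem_uniformity hε)
    -- pick preimages of the net points
    choose g hgS hgΦ using fun c (hc : c ∈ t') => ht'sub hc
    haveI : Finite ↥t' := ht'fin.to_subtype
    refine ⟨(fun c : {c // c ∈ t'} => g c c.2) '' Set.univ,
      (Set.finite_univ.image _), ?_⟩
    intro f hf
    obtain ⟨c, hc, hcd⟩ := Set.mem_iUnion₂.1 (ht'cov (Set.mem_image_of_mem Φ hf))
    refine Set.mem_iUnion₂.2 ⟨g c hc, ⟨⟨⟨c, hc⟩, Set.mem_univ _, rfl⟩, ?_⟩⟩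
    -- show `dist f (g c hc) < δ`
    set g₀ : StrongDual ℝ Y := g c hc with hg₀
    have hfS := hSnorm f hf
    have hgS' := hSnorm g₀ (hgS c hc)
    -- pointwise bound on `K`
    have hptK : ∀ y ∈ K, ‖(f - g₀) y‖ ≤ 3 * ε := by
      intro y hy
      obtain ⟨z, hz, hzy⟩ := Set.mem_iUnion₂.1 (htcov hy)
      have hn : ‖f - g₀‖ ≤ 2 :=
        le_trans (norm_sub_le _ _) (by linarith [hfS.1, hgS'.1])
      have hyz : ‖y - z‖ ≤ ε := le_of_lt (by simpa [dist_eq_norm] using hzy)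
      have h1 : ‖(f - g₀) (y - z)‖ ≤ 2 * ε :=
        le_trans ((f - g₀).le_opNorm _)
          (mul_le_mul hn hyz (norm_nonneg _) (by norm_num))
      have h2 : ‖(f - g₀) z‖ ≤ ε := by
        have hd : dist (f z) (g₀ z) ≤ dist (Φ f) c := by
          rw [← hgΦ c hc]
          simpa [hΦf] using dist_le_pi_dist (Φ f) (Φ g₀) (⟨z, hz⟩ : ↥t)
        have hle : dist (f z) (g₀ z) ≤ ε := hd.trans hcd.le
        simpa [ContinuousLinearMap.sub_apply, dist_eq_norm] using hle
      have hsplit : (f - g₀) y = (f - g₀) (y - z) + (f - g₀) z := by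
        rw [map_sub]; abel
      rw [hsplit]
      calc ‖(f - g₀) (y - z) + (f - g₀) z‖
          ≤ ‖(f - g₀) (y - z)‖ + ‖(f - g₀) z‖ := norm_add_le _ _
      _ ≤ 2 * ε + ε := add_le_add h1 h2
      _ = 3 * ε := by ring
    -- bound on `B*(f - g₀)`
    have hBbd : ‖banachAdjoint B (f - g₀)‖ ≤ 3 * ε := by
      refine ContinuousLinearMap.opNorm_le_bound _ (by positivity) fun x => ?_
      rcases eq_or_ne x 0 with rfl | hx
      · simp
      · have hxpos : (0 : ℝ) < ‖x‖ := norm_pos_iff.2 hx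
        set u : X := ‖x‖⁻¹ • x with hu
        have hun : ‖u‖ = 1 := by
          rw [hu, norm_smul, norm_inv, norm_norm, inv_mul_cancel₀ hxpos.ne']
        have hBu : B u ∈ K := subset_closure ⟨u, by simp [hun], rfl⟩
        have hval : (banachAdjoint B (f - g₀)) x = ‖x‖ * ((f - g₀) (B u)) := by
          have hxu : x = ‖x‖ • u := by
            rw [hu, smul_smul, mul_inv_cancel₀ hxpos.ne', one_smul]
          calc (banachAdjoint B (f - g₀)) x = (f - g₀) (B x) := rfl
          _ = (f - g₀) (B (‖x‖ • u)) := by rw [← hxu]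
          _ = ‖x‖ * ((f - g₀) (B u)) := by rw [map_smul, map_smul]; simp
        rw [hval]
        calc ‖‖x‖ * ((f - g₀) (B u))‖ = ‖x‖ * ‖(f - g₀) (B u)‖ := by
              rw [norm_mul, norm_norm]
        _ ≤ ‖x‖ * (3 * ε) := mul_le_mul_of_nonneg_left (hptK _ hBu) (norm_nonneg _)
        _ = 3 * ε * ‖x‖ := by ring
    -- conclude
    have hAeq : banachAdjoint A (f - g₀) = -(banachAdjoint B (f - g₀)) := by
      have h1 : banachAdjoint A f + banachAdjoint B f = 0 := hfS.2
      have h2 : banachAdjoint A g₀ + banachAdjoint B g₀ = 0 := hgS'.2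
      have := sub_eq_zero_of_eq (h1.trans h2.symm)
      simp only [map_sub]
      abel_nf
      abel_nf at this
      linear_combination (norm := abel_nf) this
    have : dist f g₀ < δ := by
      rw [dist_eq_norm]
      calc ‖f - g₀‖ ≤ C * ‖banachAdjoint A (f - g₀)‖ := key _
      _ = C * ‖banachAdjoint B (f - g₀)‖ := by rw [hAeq, norm_neg]
      _ ≤ C * (3 * ε) := mul_le_mul_of_nonneg_left hBbd hC0.le
      _ = (C / (C + 1)) * δ := by
          rw [hεdef]; field_simp
      _ < 1 * δ := by
          apply mul_lt_mul_of_pos_right _ hδ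
          rw [div_lt_one (by linarith)]; linarith
      _ = δ := one_mul δ
    exact Metric.mem_ball.2 this
  -- transfer to the subtype and conclude via Riesz's theorem
  have hNclosed : IsClosed (N : Set (StrongDual ℝ Y)) := ContinuousLinearMap.isClosed_ker T
  haveI : CompleteSpace N := hNclosed.completeSpace_coe
  have hballtb : TotallyBounded (Metric.closedBall (0 : N) 1) :=
    (totallyBounded_image_iff isUniformEmbedding_subtype_val.isUniformInducing).1 hStb
  have hcomp : IsCompact (Metric.closedBall (0 : N) 1) :=
    TotallyBounded.isCompact_of_isClosed hballtb Metric.isClosed_closedBall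
  exact FiniteDimensional.of_isCompact_closedBall₀ (V := N) ℝ one_pos hcomp
end

section
/- For κ > 0, every eigenvalue λ_{k,κ} of the operator A_κ g = −g'' − π²g + 2κφ₁²g with Dirichlet boundary conditions on (0,1) is strictly positive. -/
set_option maxHeartbeats 1000000

open Real Filter Set Topology

/-- For `κ > 0`, every eigenvalue `μ` of `A_κ g = −g'' − π² g + 2κ φ₁² g` with Dirichlet
boundary conditions on `(0,1)` is strictly positive. -/
theorem eigenvalue_pos_of_kappa_pos
    (κ : ℝ) (hκ : 0 < κ)
    (φ₁ : ℝ → ℝ) (hφ₁ : ∀ x, φ₁ x = Real.sqrt 2 * Real.sin (π * x))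
    (μ : ℝ) (g g' g'' : ℝ → ℝ)
    (hgcont : ContinuousOn g (Set.Icc 0 1))
    (hder : ∀ x ∈ Set.Ioo (0 : ℝ) 1, HasDerivAt g (g' x) x ∧ HasDerivAt g' (g'' x) x)
    (hbc0 : g 0 = 0) (hbc1 : g 1 = 0)
    (hne : ∃ x ∈ Set.Ioo (0 : ℝ) 1, g x ≠ 0)
    (heig : ∀ x ∈ Set.Ioo (0 : ℝ) 1,
      -(g'' x) - π ^ 2 * g x + 2 * κ * (φ₁ x) ^ 2 * g x = μ * g x) :
    0 < μ := by
  by_contra hcon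
  push_neg at hcon
  obtain ⟨x₀, hx₀, hgx₀⟩ := hne
  have hsin : ∀ x ∈ Set.Ioo (0:ℝ) 1, 0 < Real.sin (π * x) := by
    intro x hx
    apply Real.sin_pos_of_pos_of_lt_pi
    · exact mul_pos pi_pos hx.1
    · nlinarith [pi_pos, hx.2]
  have hg'' : ∀ x ∈ Set.Ioo (0:ℝ) 1,
      g'' x = (4*κ*Real.sin (π*x)^2 - π^2 - μ) * g x := by
    intro x hx
    have h := heig x hx
    rw [hφ₁ x, mul_pow, Real.sq_sqrt (by norm_num : (0:ℝ) ≤ 2)] at h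
    nlinarith [h]
  set c : ℝ → ℝ := fun x => π * Real.cos (π * x) / Real.sin (π * x) with hcdef
  set F : ℝ → ℝ := fun x => g x * g' x - g x ^ 2 * c x with hFdef
  set Fd : ℝ → ℝ := fun x =>
    (g' x - g x * c x) ^ 2 + g x ^ 2 * (4*κ*Real.sin (π*x)^2 - μ) with hFddef
  have hπx : ∀ x : ℝ, HasDerivAt (fun y => π * y) π x := by
    intro x
    simpa using (hasDerivAt_id x).const_mul π
  have hcder : ∀ x ∈ Set.Ioo (0:ℝ) 1,
      HasDerivAt c (-(π^2 / Real.sin (π*x)^2)) x := by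
    intro x hx
    have hs := (hsin x hx).ne'
    have h1 : HasDerivAt (fun y => π * Real.cos (π * y)) (π * (-Real.sin (π*x) * π)) x :=
      ((hπx x).cos).const_mul π
    have h2 : HasDerivAt (fun y => Real.sin (π * y)) (Real.cos (π*x) * π) x := (hπx x).sin
    have h3 : HasDerivAt c _ x := h1.div h2 hs
    convert h3 using 1
    field_simp
    ring_nf
    rw [Real.cos_sq']
    ring
  have hFder : ∀ x ∈ Set.Ioo (0:ℝ) 1, HasDerivAt F (Fd x) x := by
    intro x hx
    obtain ⟨hg1, hg2⟩ := hder x hx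
    have hD := (hg1.mul hg2).sub ((hg1.pow 2).mul (hcder x hx))
    have heq : g' x * g' x + g x * g'' x -
        ((↑2 * g x ^ (2-1) * g' x) * c x + g x ^ 2 * (-(π^2 / Real.sin (π*x)^2))) = Fd x := by
      rw [hg'' x hx]
      have hs := (hsin x hx).ne'
      simp only [hFddef, hcdef]
      field_simp
      ring_nf
      rw [Real.cos_sq']
      ring
    exact heq ▸ hD
  have hFdnonneg : ∀ x ∈ Set.Ioo (0:ℝ) 1, 0 ≤ Fd x := by
    intro x hx
    have h2 := hsin x hx
    simp only [hFddef]
    nlinarith [sq_nonneg (g' x - g x * c x), sq_nonneg (g x), mul_pos hκ (mul_pos h2 h2)]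
  have hFmono : MonotoneOn F (Set.Ioo 0 1) := by
    apply monotoneOn_of_deriv_nonneg (convex_Ioo 0 1)
    · intro x hx; exact (hFder x hx).continuousAt.continuousWithinAt
    · rw [interior_Ioo]; intro x hx
      exact (hFder x hx).differentiableAt.differentiableWithinAt
    · rw [interior_Ioo]; intro x hx
      rw [(hFder x hx).deriv]; exact hFdnonneg x hx
  -- bound on g
  obtain ⟨B, hB⟩ := isCompact_Icc.exists_bound_of_continuousOn hgcont
  have hB0 : 0 ≤ B := le_trans (norm_nonneg _) (hB 0 (by norm_num))
  set C2 : ℝ := (4*κ + π^2 + |μ|) * B with hC2def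
  have hC2 : 0 ≤ C2 := mul_nonneg (by positivity) hB0
  have hg''bd : ∀ x ∈ Set.Ioo (0:ℝ) 1, |g'' x| ≤ C2 := by
    intro x hx
    rw [hg'' x hx, abs_mul]
    have h1 : |g x| ≤ B := by
      have := hB x (Set.Ioo_subset_Icc_self hx); rwa [Real.norm_eq_abs] at this
    have hcoef : |4*κ*Real.sin (π*x)^2 - π^2 - μ| ≤ 4*κ + π^2 + |μ| := by
      have h2 : Real.sin (π*x)^2 ≤ 1 := Real.sin_sq_le_one _
      have h3 : (0:ℝ) ≤ Real.sin (π*x)^2 := sq_nonneg _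
      rw [abs_le]
      constructor <;> nlinarith [neg_abs_le μ, le_abs_self μ, pi_pos, hκ]
    exact mul_le_mul hcoef h1 (abs_nonneg _) (by positivity)
  have hlip' : ∀ x ∈ Set.Ioo (0:ℝ) 1, ∀ y ∈ Set.Ioo (0:ℝ) 1,
      |g' y - g' x| ≤ C2 * |y - x| := by
    intro x hx y hy
    have := (convex_Ioo (0:ℝ) 1).norm_image_sub_le_of_norm_hasDerivWithin_le
      (f := g') (f' := g'') (fun z hz => ((hder z hz).2).hasDerivWithinAt)
      (fun z hz => by rw [Real.norm_eq_abs]; exact hg''bd z hz) hx hy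
    simpa [Real.norm_eq_abs] using this
  set M : ℝ := |g' (1/2)| + C2 with hMdef
  have hM0 : 0 ≤ M := add_nonneg (abs_nonneg _) hC2
  have hg'bd : ∀ x ∈ Set.Ioo (0:ℝ) 1, |g' x| ≤ M := by
    intro x hx
    have h := hlip' (1/2) (by norm_num) x hx
    have hxx : |x - 1/2| ≤ 1 := by
      rw [abs_le]; constructor <;> [linarith [hx.1]; linarith [hx.2]]
    have htri : |g' x| ≤ |g' x - g' (1/2)| + |g' (1/2)| := by
      have := abs_add_le (g' x - g' (1/2)) (g' (1/2)); simpa using this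
    have h4 : C2 * |x - 1/2| ≤ C2 * 1 := mul_le_mul_of_nonneg_left hxx hC2
    rw [hMdef]
    linarith
  have hlipg : ∀ x ∈ Set.Ioo (0:ℝ) 1, ∀ y ∈ Set.Ioo (0:ℝ) 1,
      |g y - g x| ≤ M * |y - x| := by
    intro x hx y hy
    have := (convex_Ioo (0:ℝ) 1).norm_image_sub_le_of_norm_hasDerivWithin_le
      (f := g) (f' := g') (fun z hz => ((hder z hz).1).hasDerivWithinAt)
      (fun z hz => by rw [Real.norm_eq_abs]; exact hg'bd z hz) hx hy
    simpa [Real.norm_eq_abs] using this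
  have hneb0 : (𝓝[Set.Ioo (0:ℝ) 1] (0:ℝ)).NeBot := by
    rw [nhdsWithin_Ioo_eq_nhdsGT (by norm_num : (0:ℝ) < 1)]; infer_instance
  have hneb1 : (𝓝[Set.Ioo (0:ℝ) 1] (1:ℝ)).NeBot := by
    rw [nhdsWithin_Ioo_eq_nhdsLT (by norm_num : (0:ℝ) < 1)]; infer_instance
  have hid0 : Tendsto (fun ε : ℝ => ε) (𝓝[Set.Ioo (0:ℝ) 1] 0) (𝓝 0) :=
    tendsto_id.mono_left nhdsWithin_le_nhds
  have hid1 : Tendsto (fun ε : ℝ => ε) (𝓝[Set.Ioo (0:ℝ) 1] 1) (𝓝 1) :=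
    tendsto_id.mono_left nhdsWithin_le_nhds
  have hglim0 : Tendsto g (𝓝[Set.Ioo (0:ℝ) 1] 0) (𝓝 0) := by
    have h := (hgcont 0 (by norm_num)).tendsto
    rw [hbc0] at h
    exact h.mono_left (nhdsWithin_mono 0 Set.Ioo_subset_Icc_self)
  have hglim1 : Tendsto g (𝓝[Set.Ioo (0:ℝ) 1] 1) (𝓝 0) := by
    have h := (hgcont 1 (by norm_num)).tendsto
    rw [hbc1] at h
    exact h.mono_left (nhdsWithin_mono 1 Set.Ioo_subset_Icc_self)
  have hgbd0 : ∀ x ∈ Set.Ioo (0:ℝ) 1, |g x| ≤ M * x := by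
    intro x hx
    have h1 : Tendsto (fun ε => |g x - g ε|) (𝓝[Set.Ioo (0:ℝ) 1] 0) (𝓝 |g x|) := by
      have := ((tendsto_const_nhds (x := g x)).sub hglim0).abs
      simpa using this
    have h2 : Tendsto (fun ε => M * |x - ε|) (𝓝[Set.Ioo (0:ℝ) 1] 0) (𝓝 (M * x)) := by
      have := (((tendsto_const_nhds (x := x)).sub hid0).abs).const_mul M
      simpa [abs_of_pos hx.1] using this
    have hev : ∀ᶠ ε in 𝓝[Set.Ioo (0:ℝ) 1] 0, |g x - g ε| ≤ M * |x - ε| := by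
      filter_upwards [self_mem_nhdsWithin] with ε hε
      exact hlipg ε hε x hx
    simpa using le_of_tendsto_of_tendsto h1 h2 hev
  have hgbd1 : ∀ x ∈ Set.Ioo (0:ℝ) 1, |g x| ≤ M * (1 - x) := by
    intro x hx
    have h1 : Tendsto (fun ε => |g x - g ε|) (𝓝[Set.Ioo (0:ℝ) 1] 1) (𝓝 |g x|) := by
      have := ((tendsto_const_nhds (x := g x)).sub hglim1).abs
      simpa using this
    have h2 : Tendsto (fun ε => M * |x - ε|) (𝓝[Set.Ioo (0:ℝ) 1] 1) (𝓝 (M * (1 - x))) := by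
      have := (((tendsto_const_nhds (x := x)).sub hid1).abs).const_mul M
      have hax : |x - 1| = 1 - x := by rw [abs_sub_comm, abs_of_pos (by linarith [hx.2])]
      simpa [hax] using this
    have hev : ∀ᶠ ε in 𝓝[Set.Ioo (0:ℝ) 1] 1, |g x - g ε| ≤ M * |x - ε| := by
      filter_upwards [self_mem_nhdsWithin] with ε hε
      exact hlipg ε hε x hx
    exact le_of_tendsto_of_tendsto h1 h2 hev
  set K : ℝ := M^2 + M^2 * (π/2) with hKdef
  have hK0 : 0 ≤ K := by positivity
  -- bound on c near the endpoints
  have hcbd0 : ∀ x ∈ Set.Ioo (0:ℝ) 1, x ≤ 1/2 → x * |c x| ≤ π/2 := by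
    intro x hx hx2
    have hs := hsin x hx
    have hsge : 2 * x ≤ Real.sin (π * x) := by
      have := Real.mul_le_sin (x := π * x) (le_of_lt (mul_pos pi_pos hx.1))
        (by nlinarith [pi_pos])
      have hπ : π ≠ 0 := pi_ne_zero
      calc 2 * x = 2 / π * (π * x) := by field_simp
        _ ≤ Real.sin (π * x) := this
    have hcos : |Real.cos (π * x)| ≤ 1 := Real.abs_cos_le_one _
    have hcabs : |c x| * Real.sin (π*x) = π * |Real.cos (π*x)| := by
      simp only [hcdef]
      rw [abs_div, abs_mul, abs_of_pos pi_pos, abs_of_pos hs]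
      field_simp
    nlinarith [mul_nonneg (sub_nonneg.2 hsge) (abs_nonneg (c x)),
      mul_le_mul_of_nonneg_left hcos (le_of_lt pi_pos)]
  have hcbd1 : ∀ x ∈ Set.Ioo (0:ℝ) 1, 1/2 ≤ x → (1 - x) * |c x| ≤ π/2 := by
    intro x hx hx2
    have hs := hsin x hx
    have hsge : 2 * (1 - x) ≤ Real.sin (π * x) := by
      have h := Real.mul_le_sin (x := π - π * x) (by nlinarith [pi_pos, hx.2])
        (by nlinarith [pi_pos])
      rw [Real.sin_pi_sub] at h
      have hπ : π ≠ 0 := pi_ne_zero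
      calc 2 * (1 - x) = 2 / π * (π - π * x) := by field_simp
        _ ≤ Real.sin (π * x) := h
    have hcos : |Real.cos (π * x)| ≤ 1 := Real.abs_cos_le_one _
    have hcabs : |c x| * Real.sin (π*x) = π * |Real.cos (π*x)| := by
      simp only [hcdef]
      rw [abs_div, abs_mul, abs_of_pos pi_pos, abs_of_pos hs]
      field_simp
    nlinarith [mul_nonneg (sub_nonneg.2 hsge) (abs_nonneg (c x)),
      mul_le_mul_of_nonneg_left hcos (le_of_lt pi_pos)]
  have hFbd0 : ∀ x ∈ Set.Ioo (0:ℝ) 1, x ≤ 1/2 → |F x| ≤ K * x := by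
    intro x hx hx2
    clear_value M K
    have h1 := hgbd0 x hx
    have h2 := hg'bd x hx
    have h3 := hcbd0 x hx hx2
    have htri : |F x| ≤ |g x| * |g' x| + |g x|^2 * |c x| := by
      simp only [hFdef]
      calc |g x * g' x - g x ^ 2 * c x| ≤ |g x * g' x| + |g x ^ 2 * c x| := abs_sub _ _
        _ = |g x| * |g' x| + |g x|^2 * |c x| := by rw [abs_mul, abs_mul, abs_pow]
    have hgx0 : 0 ≤ |g x| := abs_nonneg _
    have hcx0 : 0 ≤ |c x| := abs_nonneg _
    have hMx0 : (0:ℝ) ≤ M * x := mul_nonneg hM0 (le_of_lt hx.1)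
    have hstep : |g x|^2 * |c x| ≤ M^2 * (π/2) * x := by
      have ha : |g x|^2 ≤ (M*x)^2 := by nlinarith
      have hb : |g x|^2 * |c x| ≤ (M*x)^2 * |c x| := mul_le_mul_of_nonneg_right ha hcx0
      have hc2 : (M*x)^2 * |c x| = (M^2 * x) * (x * |c x|) := by ring
      have hd : (M^2 * x) * (x * |c x|) ≤ (M^2 * x) * (π/2) :=
        mul_le_mul_of_nonneg_left h3 (mul_nonneg (sq_nonneg M) (le_of_lt hx.1))
      calc |g x|^2 * |c x| ≤ (M*x)^2 * |c x| := hb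
        _ = (M^2 * x) * (x * |c x|) := hc2
        _ ≤ (M^2 * x) * (π/2) := hd
        _ = M^2 * (π/2) * x := by ring
    have hfin : |g x| * |g' x| ≤ (M * x) * M := mul_le_mul h1 h2 (abs_nonneg _) hMx0
    have hre : (M * x) * M = M^2 * x := by ring
    simp only [hKdef]
    linarith
  have hFbd1 : ∀ x ∈ Set.Ioo (0:ℝ) 1, 1/2 ≤ x → |F x| ≤ K * (1 - x) := by
    intro x hx hx2
    clear_value M K
    have h1 := hgbd1 x hx
    have h2 := hg'bd x hx
    have h3 := hcbd1 x hx hx2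
    have htri : |F x| ≤ |g x| * |g' x| + |g x|^2 * |c x| := by
      simp only [hFdef]
      calc |g x * g' x - g x ^ 2 * c x| ≤ |g x * g' x| + |g x ^ 2 * c x| := abs_sub _ _
        _ = |g x| * |g' x| + |g x|^2 * |c x| := by rw [abs_mul, abs_mul, abs_pow]
    have hgx0 : 0 ≤ |g x| := abs_nonneg _
    have hcx0 : 0 ≤ |c x| := abs_nonneg _
    have hx1 : (0:ℝ) < 1 - x := by linarith [hx.2]
    have hMx0 : (0:ℝ) ≤ M * (1 - x) := mul_nonneg hM0 (le_of_lt hx1)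
    have hstep : |g x|^2 * |c x| ≤ M^2 * (π/2) * (1 - x) := by
      have ha : |g x|^2 ≤ (M*(1-x))^2 := by nlinarith
      have hb : |g x|^2 * |c x| ≤ (M*(1-x))^2 * |c x| := mul_le_mul_of_nonneg_right ha hcx0
      have hc2 : (M*(1-x))^2 * |c x| = (M^2 * (1-x)) * ((1-x) * |c x|) := by ring
      have hd : (M^2 * (1-x)) * ((1-x) * |c x|) ≤ (M^2 * (1-x)) * (π/2) :=
        mul_le_mul_of_nonneg_left h3 (mul_nonneg (sq_nonneg M) (le_of_lt hx1))
      calc |g x|^2 * |c x| ≤ (M*(1-x))^2 * |c x| := hb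
        _ = (M^2 * (1-x)) * ((1-x) * |c x|) := hc2
        _ ≤ (M^2 * (1-x)) * (π/2) := hd
        _ = M^2 * (π/2) * (1 - x) := by ring
    have hfin : |g x| * |g' x| ≤ (M * (1-x)) * M := mul_le_mul h1 h2 (abs_nonneg _) hMx0
    have hre : (M * (1-x)) * M = M^2 * (1-x) := by ring
    simp only [hKdef]
    linarith
  have hF0 : Tendsto F (𝓝[Set.Ioo (0:ℝ) 1] 0) (𝓝 0) := by
    have hev : ∀ᶠ x in 𝓝[Set.Ioo (0:ℝ) 1] (0:ℝ), ‖F x‖ ≤ K * x := by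
      filter_upwards [self_mem_nhdsWithin,
        eventually_nhdsWithin_of_eventually_nhds (eventually_lt_nhds (by norm_num : (0:ℝ) < 1/2))]
        with x hx hx2
      rw [Real.norm_eq_abs]
      exact hFbd0 x hx (le_of_lt hx2)
    have htend : Tendsto (fun x : ℝ => K * x) (𝓝[Set.Ioo (0:ℝ) 1] 0) (𝓝 0) := by
      have := hid0.const_mul K
      rwa [mul_zero] at this
    exact squeeze_zero_norm' hev htend
  have hF1 : Tendsto F (𝓝[Set.Ioo (0:ℝ) 1] 1) (𝓝 0) := by
    have hev : ∀ᶠ x in 𝓝[Set.Ioo (0:ℝ) 1] (1:ℝ), ‖F x‖ ≤ K * (1 - x) := by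
      filter_upwards [self_mem_nhdsWithin,
        eventually_nhdsWithin_of_eventually_nhds (eventually_gt_nhds (by norm_num : (1:ℝ)/2 < 1))]
        with x hx hx2
      rw [Real.norm_eq_abs]
      exact hFbd1 x hx (le_of_lt hx2)
    have htend : Tendsto (fun x : ℝ => K * (1 - x)) (𝓝[Set.Ioo (0:ℝ) 1] 1) (𝓝 0) := by
      have := ((tendsto_const_nhds (x := (1:ℝ))).sub hid1).const_mul K
      rwa [sub_self, mul_zero] at this
    exact squeeze_zero_norm' hev htend
  have hFzero : ∀ x ∈ Set.Ioo (0:ℝ) 1, F x = 0 := by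
    intro x hx
    have hle : F x ≤ 0 := by
      refine ge_of_tendsto hF1 ?_
      filter_upwards [self_mem_nhdsWithin,
        eventually_nhdsWithin_of_eventually_nhds (eventually_gt_nhds hx.2)] with y hy hxy
      exact hFmono hx hy (le_of_lt hxy)
    have hge : 0 ≤ F x := by
      refine le_of_tendsto hF0 ?_
      filter_upwards [self_mem_nhdsWithin,
        eventually_nhdsWithin_of_eventually_nhds (eventually_lt_nhds hx.1)] with y hy hxy
      exact hFmono hy hx (le_of_lt hxy)
    linarith
  have hFAt : HasDerivAt F 0 x₀ := by
    refine (hasDerivAt_const x₀ (0:ℝ)).congr_of_eventuallyEq ?_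
    filter_upwards [isOpen_Ioo.mem_nhds hx₀] with y hy
    exact hFzero y hy
  have huni : Fd x₀ = 0 := (hFder x₀ hx₀).unique hFAt
  have hs0 := hsin x₀ hx₀
  have hg2 : 0 < g x₀ ^ 2 := by positivity
  simp only [hFddef] at huni
  nlinarith [sq_nonneg (g' x₀ - g x₀ * c x₀), mul_pos (mul_pos hκ (mul_pos hs0 hs0)) hg2]
end
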